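/- Let C be a compact convex subset of ℝ² with positive area, let P be a point, and let A(θ) = area(C ∩ H(P,θ)) with H(P,θ) = {x : ⟨x − P, (−sin θ, cos θ)⟩ ≥ 0}. Suppose α < β with β − α < π, A(α) = 0 and A(β) = area(C), and let n ≥ 2 be an integer. Then there exists a unique strictly increasing tuple (θ₁, …, θ_{n−1}) of angles in the open interval (α, β) such that A(θ_k) = (k/n) · area(C) for every k = 1, …, n−1. In other words, a point P exterior to C admits exactly one fan of n−1 rays partitioning C into n pieces of equal area. -/

import Mathlib

open MeasureTheory
open scoped RealInnerProductSpace ENNReal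

noncomputable def sweepF (P : EuclideanSpace ℝ (Fin 2)) (θ : ℝ) (x : EuclideanSpace ℝ (Fin 2)) : ℝ :=
  ⟪x - P, (!₂[-Real.sin θ, Real.cos θ] : EuclideanSpace ℝ (Fin 2))⟫

lemma sweepF_eq (P : EuclideanSpace ℝ (Fin 2)) (θ : ℝ) (x : EuclideanSpace ℝ (Fin 2)) :
    sweepF P θ x = -(x 0 - P 0) * Real.sin θ + (x 1 - P 1) * Real.cos θ := by
  simp [sweepF, PiLp.inner_apply, Fin.sum_univ_two, RCLike.inner_apply, PiLp.sub_apply]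
  ring

lemma sweepF_continuous_x (P : EuclideanSpace ℝ (Fin 2)) (θ : ℝ) :
    Continuous (fun x => sweepF P θ x) := by
  unfold sweepF; exact (continuous_id.sub continuous_const).inner continuous_const

lemma sweepF_continuous_theta (P x : EuclideanSpace ℝ (Fin 2)) :
    Continuous (fun θ => sweepF P θ x) := by
  simp only [sweepF_eq]; fun_prop

lemma sweepF_affine (P x y : EuclideanSpace ℝ (Fin 2)) (θ t : ℝ) :
    sweepF P θ (x + t • (y - x)) = (1 - t) * sweepF P θ x + t * sweepF P θ y := by
  simp only [sweepF_eq, PiLp.add_apply, PiLp.smul_apply, PiLp.sub_apply, smul_eq_mul]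
  ring

lemma fan_trig_mono {α β θ₁ θ₂ a b : ℝ} (hπ : β - α < Real.pi)
    (h1 : α ≤ θ₁) (h12 : θ₁ ≤ θ₂) (h2 : θ₂ ≤ β)
    (hb : 0 ≤ -a * Real.sin β + b * Real.cos β)
    (ht1 : 0 ≤ -a * Real.sin θ₁ + b * Real.cos θ₁) :
    0 ≤ -a * Real.sin θ₂ + b * Real.cos θ₂ := by
  rcases eq_or_lt_of_le h2 with rfl | h2'
  · rcases eq_or_lt_of_le h12 with rfl | h12'
    · exact ht1
    · exact hb
  · have key : (-a * Real.sin θ₂ + b * Real.cos θ₂) * Real.sin (β - θ₁)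
        = (-a * Real.sin θ₁ + b * Real.cos θ₁) * Real.sin (β - θ₂)
          + (-a * Real.sin β + b * Real.cos β) * Real.sin (θ₂ - θ₁) := by
      rw [Real.sin_sub, Real.sin_sub, Real.sin_sub]; ring
    have s1 : 0 < Real.sin (β - θ₁) :=
      Real.sin_pos_of_pos_of_lt_pi (by linarith) (by linarith)
    have s2 : 0 ≤ Real.sin (β - θ₂) :=
      Real.sin_nonneg_of_nonneg_of_le_pi (by linarith) (by linarith)
    have s3 : 0 ≤ Real.sin (θ₂ - θ₁) :=
      Real.sin_nonneg_of_nonneg_of_le_pi (by linarith) (by linarith)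
    nlinarith [mul_nonneg ht1 s2, mul_nonneg hb s3]

lemma fan_trig_indep {θ θ' a b : ℝ} (h : θ < θ') (hπ : θ' - θ < Real.pi)
    (e1 : -a * Real.sin θ + b * Real.cos θ = 0)
    (e2 : -a * Real.sin θ' + b * Real.cos θ' = 0) : a = 0 ∧ b = 0 := by
  have hs : 0 < Real.sin (θ' - θ) :=
    Real.sin_pos_of_pos_of_lt_pi (by linarith) hπ
  have ha : a * Real.sin (θ' - θ) = 0 := by
    rw [Real.sin_sub]; linear_combination Real.cos θ' * e1 - Real.cos θ * e2
  have hbb : b * Real.sin (θ' - θ) = 0 := by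
    rw [Real.sin_sub]; linear_combination Real.sin θ' * e1 - Real.sin θ * e2
  exact ⟨by rcases mul_eq_zero.mp ha with h' | h'; exacts [h', absurd h' hs.ne'],
         by rcases mul_eq_zero.mp hbb with h' | h'; exacts [h', absurd h' hs.ne']⟩

lemma null_line (Q v : EuclideanSpace ℝ (Fin 2)) (hv : v ≠ 0) :
    volume {x : EuclideanSpace ℝ (Fin 2) | ⟪x - Q, v⟫ = (0:ℝ)} = 0 := by
  have hset : {x : EuclideanSpace ℝ (Fin 2) | ⟪x - Q, v⟫ = (0:ℝ)} =
      ↑(AffineSubspace.mk' Q ((ℝ ∙ v)ᗮ)) := by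
    ext x
    rw [AffineSubspace.mem_coe, AffineSubspace.mem_mk',
      Submodule.mem_orthogonal_singleton_iff_inner_right]
    rw [vsub_eq_sub, real_inner_comm, Set.mem_setOf_eq]
  rw [hset]
  apply Measure.addHaar_affineSubspace
  intro h
  have hd : ((ℝ ∙ v)ᗮ : Submodule ℝ (EuclideanSpace ℝ (Fin 2))) = ⊤ := by
    have h2 := AffineSubspace.direction_mk' Q ((ℝ ∙ v)ᗮ)
    rw [h, AffineSubspace.direction_top] at h2
    exact h2.symm
  have h3 : v ∈ (ℝ ∙ v)ᗮ := hd ▸ Submodule.mem_top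
  have h4 := Submodule.mem_orthogonal_singleton_iff_inner_right.mp h3
  rw [inner_self_eq_zero] at h4
  exact hv h4

lemma sweep_vec_ne_zero (θ : ℝ) :
    (!₂[-Real.sin θ, Real.cos θ] : EuclideanSpace ℝ (Fin 2)) ≠ 0 := by
  intro h0
  have h1 : (!₂[-Real.sin θ, Real.cos θ] : EuclideanSpace ℝ (Fin 2)) 1 = 0 := by rw [h0]; rfl
  have h2 : (!₂[-Real.sin θ, Real.cos θ] : EuclideanSpace ℝ (Fin 2)) 0 = 0 := by rw [h0]; rfl
  simp at h1 h2
  nlinarith [Real.sin_sq_add_cos_sq θ]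

/-- If the line through `P` sweeps across the compact convex region `C` exactly once
as the angle goes from `α` to `β` (with `β - α < π`), then for every `n ≥ 2` there is a
unique strictly increasing tuple of `n - 1` angles in `(α, β)` at which the swept areas
are `k/n · area C` for `k = 1, …, n-1`: an exterior point admits exactly one
equipartitioning fan of `n - 1` rays. -/
theorem existsUnique_equipartitioning_fan_of_sweep
    (C : Set (EuclideanSpace ℝ (Fin 2))) (hCcompact : IsCompact C) (hCconv : Convex ℝ C)
    (hCpos : 0 < volume C)
    (P : EuclideanSpace ℝ (Fin 2))
    (H : EuclideanSpace ℝ (Fin 2) → ℝ → Set (EuclideanSpace ℝ (Fin 2)))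
    (hH : ∀ Q θ, H Q θ =
      {x | 0 ≤ ⟪x - Q, (!₂[-Real.sin θ, Real.cos θ] : EuclideanSpace ℝ (Fin 2))⟫})
    (A : ℝ → ℝ≥0∞) (hA : ∀ θ, A θ = volume (C ∩ H P θ))
    (α β : ℝ) (hαβ : α < β) (hπ : β - α < Real.pi)
    (hα : A α = 0) (hβ : A β = volume C)
    (n : ℕ) (hn : 2 ≤ n) :
    ∃! θ : Fin (n - 1) → ℝ, StrictMono θ ∧ (∀ k, θ k ∈ Set.Ioo α β) ∧
      ∀ k : Fin (n - 1), A (θ k) = (((k : ℕ) + 1 : ℝ≥0∞) / (n : ℝ≥0∞)) * volume C := by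
  classical
  have hF : ∀ θ, H P θ = {x | 0 ≤ sweepF P θ x} := fun θ => hH P θ
  have hvolC : volume C ≠ ⊤ := hCcompact.measure_lt_top.ne
  have hCmeas : MeasurableSet C := hCcompact.isClosed.measurableSet
  have hHclosed : ∀ θ, IsClosed (H P θ) := by
    intro θ
    rw [hF θ]
    exact isClosed_Ici.preimage (sweepF_continuous_x P θ)
  have hHmeas : ∀ θ, MeasurableSet (H P θ) := fun θ => (hHclosed θ).measurableSet
  have hnullβ : volume (C \ H P β) = 0 := by
    have h1 := measure_inter_add_diff (μ := volume) C (hHmeas β)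
    rw [← hA β, hβ] at h1
    exact (ENNReal.add_right_inj hvolC).mp (h1.trans (add_zero _).symm)
  have hpt : ∀ (x : EuclideanSpace ℝ (Fin 2)) θ₁ θ₂, α ≤ θ₁ → θ₁ ≤ θ₂ → θ₂ ≤ β →
      0 ≤ sweepF P β x → 0 ≤ sweepF P θ₁ x → 0 ≤ sweepF P θ₂ x := by
    intro x θ₁ θ₂ h1 h12 h2 hb ht
    rw [sweepF_eq] at hb ht ⊢
    exact fan_trig_mono hπ h1 h12 h2 hb ht
  have hsub : ∀ θ₁ θ₂, α ≤ θ₁ → θ₁ ≤ θ₂ → θ₂ ≤ β →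
      (C ∩ H P θ₁) ∩ H P β ⊆ (C ∩ H P θ₂) ∩ H P β := by
    intro θ₁ θ₂ h1 h12 h2 x hx
    obtain ⟨⟨hxC, hx1⟩, hxβ⟩ := hx
    rw [hF θ₁] at hx1
    rw [hF β] at hxβ
    refine ⟨⟨hxC, ?_⟩, by rw [hF β]; exact hxβ⟩
    rw [hF θ₂]
    exact hpt x θ₁ θ₂ h1 h12 h2 hxβ hx1
  have hAeq : ∀ θ, volume ((C ∩ H P θ) ∩ H P β) = A θ := by
    intro θ
    refine le_antisymm (by rw [hA]; exact measure_mono Set.inter_subset_left) ?_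
    rw [hA]
    calc volume (C ∩ H P θ)
        ≤ volume ((C ∩ H P θ) ∩ H P β) + volume ((C ∩ H P θ) \ H P β) :=
          measure_le_inter_add_diff volume _ _
      _ ≤ volume ((C ∩ H P θ) ∩ H P β) + volume (C \ H P β) := by
          gcongr
          exact Set.inter_subset_left
      _ = volume ((C ∩ H P θ) ∩ H P β) := by rw [hnullβ, add_zero]
  have hmono : ∀ θ₁ θ₂, α ≤ θ₁ → θ₁ ≤ θ₂ → θ₂ ≤ β → A θ₁ ≤ A θ₂ := by
    intro θ₁ θ₂ h1 h12 h2
    rw [← hAeq θ₁, ← hAeq θ₂]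
    exact measure_mono (hsub θ₁ θ₂ h1 h12 h2)
  -- continuity of A
  have hAcont : Continuous A := by
    rw [continuous_iff_continuousAt]
    intro θ₀
    rw [ContinuousAt, Filter.tendsto_iff_seq_tendsto]
    intro u hu
    have hrepr : ∀ θ, A θ = ∫⁻ x, (C ∩ H P θ).indicator 1 x := by
      intro θ; rw [hA, ← lintegral_indicator_one (hCmeas.inter (hHmeas θ))]
    simp only [Function.comp_def, hrepr]
    apply tendsto_lintegral_of_dominated_convergence (bound := C.indicator 1)
    · intro m
      exact measurable_const.indicator (hCmeas.inter (hHmeas (u m)))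
    · intro m
      exact Filter.Eventually.of_forall fun x =>
        Set.indicator_le_indicator_of_subset Set.inter_subset_left (fun _ => zero_le) x
    · rw [lintegral_indicator_one hCmeas]; exact hvolC
    · have hline : volume {x : EuclideanSpace ℝ (Fin 2) | sweepF P θ₀ x = 0} = 0 :=
        null_line P _ (sweep_vec_ne_zero θ₀)
      filter_upwards [measure_eq_zero_iff_ae_notMem.mp hline] with x hx
      replace hx : sweepF P θ₀ x ≠ 0 := hx
      by_cases hxC : x ∈ C
      · have hcont : Filter.Tendsto (fun m => sweepF P (u m) x) Filter.atTop
            (nhds (sweepF P θ₀ x)) :=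
          ((sweepF_continuous_theta P x).tendsto θ₀).comp hu
        rcases Ne.lt_or_gt hx with hneg | hpos
        · have hev : ∀ᶠ m in Filter.atTop, sweepF P (u m) x < 0 :=
            hcont.eventually_lt_const hneg
          show Filter.Tendsto (fun m => (C ∩ H P (u m)).indicator (1 : EuclideanSpace ℝ (Fin 2) → ℝ≥0∞) x) Filter.atTop
            (nhds ((C ∩ H P θ₀).indicator 1 x))
          have hval : (C ∩ H P θ₀).indicator (1 : EuclideanSpace ℝ (Fin 2) → ℝ≥0∞) x = 0 := by
            apply Set.indicator_of_notMem
            rintro ⟨-, hxH⟩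
            rw [hF θ₀] at hxH
            exact absurd hxH (not_le.mpr hneg)
          rw [hval]
          refine Filter.Tendsto.congr' ?_ tendsto_const_nhds
          filter_upwards [hev] with m hm
          symm
          apply Set.indicator_of_notMem
          rintro ⟨-, hxH⟩
          rw [hF (u m)] at hxH
          exact absurd hxH (not_le.mpr hm)
        · have hev : ∀ᶠ m in Filter.atTop, 0 < sweepF P (u m) x :=
            hcont.eventually_const_lt hpos
          show Filter.Tendsto (fun m => (C ∩ H P (u m)).indicator (1 : EuclideanSpace ℝ (Fin 2) → ℝ≥0∞) x) Filter.atTop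
            (nhds ((C ∩ H P θ₀).indicator 1 x))
          have hval : (C ∩ H P θ₀).indicator (1 : EuclideanSpace ℝ (Fin 2) → ℝ≥0∞) x = 1 := by
            apply Set.indicator_of_mem
            exact ⟨hxC, by rw [hF θ₀]; exact hpos.le⟩
          rw [hval]
          refine Filter.Tendsto.congr' ?_ tendsto_const_nhds
          filter_upwards [hev] with m hm
          symm
          apply Set.indicator_of_mem
          exact ⟨hxC, by rw [hF (u m)]; exact hm.le⟩
      · show Filter.Tendsto (fun m => (C ∩ H P (u m)).indicator 1 x) Filter.atTop
          (nhds ((C ∩ H P θ₀).indicator 1 x))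
        have hz : ∀ θ, (C ∩ H P θ).indicator (1 : EuclideanSpace ℝ (Fin 2) → ℝ≥0∞) x = 0 :=
          fun θ => Set.indicator_of_notMem (fun hmem => hxC hmem.1) 1
        simp only [hz]
        exact tendsto_const_nhds
  -- frontier facts
  have hfr : volume (frontier C) = 0 := hCconv.addHaar_frontier volume
  have hfr_eq : frontier C = C \ interior C := by
    rw [frontier, hCcompact.isClosed.closure_eq]
  -- strict monotonicity at interior values
  have hstrict : ∀ θ₁ θ₂, α ≤ θ₁ → θ₁ < θ₂ → θ₂ ≤ β → 0 < A θ₁ → A θ₂ < volume C →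
      A θ₁ < A θ₂ := by
    intro θ₁ θ₂ h1 h12 h2 hpos hlt
    rcases lt_or_ge (A θ₁) (A θ₂) with h | h
    · exact h
    exfalso
    have heq : A θ₁ = A θ₂ := le_antisymm (hmono θ₁ θ₂ h1 h12.le h2) h
    have hfin1 : volume ((C ∩ H P θ₁) ∩ H P β) ≠ ⊤ := by
      refine ne_top_of_le_ne_top hvolC (measure_mono ?_)
      exact fun x hx => hx.1.1
    have hgap : volume (((C ∩ H P θ₂) ∩ H P β) \ ((C ∩ H P θ₁) ∩ H P β)) = 0 := by
      rw [measure_diff (hsub θ₁ θ₂ h1 h12.le h2)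
        ((hCmeas.inter (hHmeas θ₁)).inter (hHmeas β)).nullMeasurableSet hfin1]
      rw [hAeq, hAeq, ← heq, tsub_self]
    -- pick x
    have hDcover : (C ∩ H P θ₁) ∩ H P β ⊆
        (((C ∩ H P θ₁) ∩ H P β ∩ interior C) \ {P}) ∪ (frontier C ∪ {P}) := by
      intro w hw
      by_cases hP : w = P
      · exact Or.inr (Or.inr hP)
      by_cases hint : w ∈ interior C
      · exact Or.inl ⟨⟨hw, hint⟩, hP⟩
      · exact Or.inr (Or.inl (hfr_eq ▸ ⟨hw.1.1, hint⟩))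
    have hDpos : volume ((((C ∩ H P θ₁) ∩ H P β ∩ interior C) \ {P})) ≠ 0 := by
      intro h0
      have hle := measure_mono (μ := volume) hDcover
      rw [hAeq θ₁] at hle
      have : volume ((((C ∩ H P θ₁) ∩ H P β ∩ interior C) \ {P}) ∪ (frontier C ∪ {P})) = 0 :=
        measure_union_null h0 (measure_union_null hfr (measure_singleton P))
      rw [this] at hle
      exact absurd (le_antisymm hle zero_le) hpos.ne'
    obtain ⟨x, ⟨⟨⟨hxC, hx1⟩, hxβ⟩, hxint⟩, hxP⟩ := nonempty_of_measure_ne_zero hDpos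
    rw [hF θ₁] at hx1
    rw [hF β] at hxβ
    rw [Set.mem_singleton_iff] at hxP
    -- the line through x and P
    set w : EuclideanSpace ℝ (Fin 2) := !₂[-(P 1 - x 1), P 0 - x 0] with hw_def
    have hw0 : w 0 = -(P 1 - x 1) := rfl
    have hw1 : w 1 = P 0 - x 0 := rfl
    have hwne : w ≠ 0 := by
      intro h0
      apply hxP
      have e0 : w 0 = 0 := by rw [h0]; rfl
      have e1 : w 1 = 0 := by rw [h0]; rfl
      rw [hw0] at e0; rw [hw1] at e1
      ext i
      fin_cases i
      · show x 0 = P 0; linarith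
      · show x 1 = P 1; linarith
    have hLnull : volume {z : EuclideanSpace ℝ (Fin 2) | ⟪z - x, w⟫ = (0:ℝ)} = 0 :=
      null_line x w hwne
    -- pick y
    have hEne : volume (C \ H P θ₂) ≠ 0 := by
      intro h0
      have h1 := measure_inter_add_diff (μ := volume) C (hHmeas θ₂)
      rw [h0, add_zero, ← hA θ₂] at h1
      exact absurd h1 hlt.ne
    have hEcover : C \ H P θ₂ ⊆
        ((((C \ H P θ₂) ∩ H P β ∩ interior C) \ {z | ⟪z - x, w⟫ = (0:ℝ)}) ∪
          ((C \ H P β) ∪ frontier C ∪ {z | ⟪z - x, w⟫ = (0:ℝ)})) := by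
      intro z hz
      by_cases hL : z ∈ {z | ⟪z - x, w⟫ = (0:ℝ)}
      · exact Or.inr (Or.inr hL)
      by_cases hzβ : z ∈ H P β
      · by_cases hint : z ∈ interior C
        · exact Or.inl ⟨⟨⟨hz, hzβ⟩, hint⟩, hL⟩
        · exact Or.inr (Or.inl (Or.inr (hfr_eq ▸ ⟨hz.1, hint⟩)))
      · exact Or.inr (Or.inl (Or.inl ⟨hz.1, hzβ⟩))
    have hEpos : volume ((((C \ H P θ₂) ∩ H P β ∩ interior C) \
        {z | ⟪z - x, w⟫ = (0:ℝ)})) ≠ 0 := by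
      intro h0
      apply hEne
      refine le_antisymm ?_ zero_le
      refine le_trans (measure_mono hEcover) ?_
      rw [measure_union_null h0
        (measure_union_null (measure_union_null hnullβ hfr) hLnull)]
    obtain ⟨y, ⟨⟨⟨hyC, hy2⟩, hyβ⟩, hyint⟩, hyL⟩ := nonempty_of_measure_ne_zero hEpos
    rw [hF θ₂] at hy2
    rw [hF β] at hyβ
    rw [Set.mem_setOf_eq] at hy2 hyβ
    rw [Set.mem_setOf_eq] at hx1 hxβ
    have hy2' : sweepF P θ₂ y < 0 := not_le.mp hy2
    have hx2 : 0 ≤ sweepF P θ₂ x := hpt x θ₁ θ₂ h1 h12.le h2 hxβ hx1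
    have hy1 : sweepF P θ₁ y < 0 := by
      by_contra hcon
      exact hy2 (hpt y θ₁ θ₂ h1 h12.le h2 hyβ (not_lt.mp hcon))
    set p := sweepF P θ₁ x with hp_def
    set q := sweepF P θ₁ y with hq_def
    set r := sweepF P θ₂ x with hr_def
    set s := sweepF P θ₂ y with hs_def
    have hpq : 0 < p - q := by linarith
    have hrs : 0 < r - s := by linarith
    set t₀ := p / (p - q) with ht₀_def
    set t₁ := r / (r - s) with ht₁_def
    have ht₀0 : 0 ≤ t₀ := div_nonneg hx1 hpq.le
    have ht₀1 : t₀ < 1 := (div_lt_one hpq).mpr (by linarith)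
    have ht₁0 : 0 ≤ t₁ := div_nonneg hx2 hrs.le
    have ht₁1 : t₁ < 1 := (div_lt_one hrs).mpr (by linarith)
    have ht₀e : t₀ * (p - q) = p := div_mul_cancel₀ p hpq.ne'
    have ht₁e : t₁ * (r - s) = r := div_mul_cancel₀ r hrs.ne'
    set z : ℝ → EuclideanSpace ℝ (Fin 2) := fun t => x + t • (y - x) with hz_def
    have hz1 : ∀ t, sweepF P θ₁ (z t) = p - t * (p - q) := by
      intro t; rw [sweepF_affine]; ring
    have hz2 : ∀ t, sweepF P θ₂ (z t) = r - t * (r - s) := by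
      intro t; rw [sweepF_affine]; ring
    have hzβ : ∀ t, 0 ≤ t → t ≤ 1 → 0 ≤ sweepF P β (z t) := by
      intro t h0 h1'
      rw [sweepF_affine]
      have := mul_nonneg (by linarith : (0:ℝ) ≤ 1 - t) hxβ
      have := mul_nonneg h0 hyβ
      linarith
    have hzint : ∀ t, 0 ≤ t → t ≤ 1 → z t ∈ interior C := by
      intro t h0 h1'
      have hmem := hCconv.interior hxint hyint (by linarith : (0:ℝ) ≤ 1 - t) h0 (by ring)
      have hzz : z t = (1 - t) • x + t • y := by
        simp only [hz_def]
        module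
      rw [hzz]
      exact hmem
    rcases lt_trichotomy t₀ t₁ with hc | hc | hc
    · -- gap sector has interior points : contradiction with hgap
      set t := (t₀ + t₁) / 2 with ht_def
      have ht0 : t₀ < t := by rw [ht_def]; linarith
      have ht1 : t < t₁ := by rw [ht_def]; linarith
      have htpos : 0 < t := lt_of_le_of_lt ht₀0 ht0
      have htlt : t < 1 := lt_trans ht1 ht₁1
      have hs1 : sweepF P θ₁ (z t) < 0 := by
        rw [hz1]
        have := mul_lt_mul_of_pos_right ht0 hpq
        rw [ht₀e] at this
        linarith
      have hs2 : 0 < sweepF P θ₂ (z t) := by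
        rw [hz2]
        have := mul_lt_mul_of_pos_right ht1 hrs
        rw [ht₁e] at this
        linarith
      set W := interior C ∩ {v | sweepF P θ₁ v < 0} ∩ {v | 0 < sweepF P θ₂ v} with hW_def
      have hWopen : IsOpen W := by
        refine (isOpen_interior.inter ?_).inter ?_
        · exact isOpen_Iio.preimage (sweepF_continuous_x P θ₁)
        · exact isOpen_Ioi.preimage (sweepF_continuous_x P θ₂)
      have hWne : W.Nonempty := ⟨z t, ⟨hzint t htpos.le htlt.le, hs1⟩, hs2⟩
      have hWpos : 0 < volume W := hWopen.measure_pos volume hWne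
      have hWsub : W ⊆ (((C ∩ H P θ₂) ∩ H P β) \ ((C ∩ H P θ₁) ∩ H P β)) ∪ (C \ H P β) := by
        rintro v ⟨⟨hvint, hv1⟩, hv2⟩
        simp only [Set.mem_setOf_eq] at hv1 hv2
        have hvC : v ∈ C := interior_subset hvint
        by_cases hvβ : v ∈ H P β
        · refine Or.inl ⟨⟨⟨hvC, ?_⟩, hvβ⟩, ?_⟩
          · rw [hF θ₂]; exact le_of_lt hv2
          · rintro ⟨⟨-, hv1'⟩, -⟩
            rw [hF θ₁] at hv1'
            simp only [Set.mem_setOf_eq] at hv1'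
            exact absurd hv1' (not_le.mpr hv1)
        · exact Or.inr ⟨hvC, hvβ⟩
      have : volume W = 0 := by
        refine le_antisymm ?_ zero_le
        refine le_trans (measure_mono hWsub) ?_
        rw [measure_union_null hgap hnullβ]
      exact absurd this hWpos.ne'
    · -- both lines cross the segment at the same point, which must be P : contradiction
      have e1 : sweepF P θ₁ (z t₀) = 0 := by rw [hz1, ht₀e]; ring
      have e2 : sweepF P θ₂ (z t₀) = 0 := by rw [hz2, hc, ht₁e]; ring
      rw [sweepF_eq] at e1 e2
      have hππ : θ₂ - θ₁ < Real.pi := by linarith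
      obtain ⟨ha, hb⟩ := fan_trig_indep h12 hππ e1 e2
      have hz0 : (z t₀) 0 = x 0 + t₀ * (y 0 - x 0) := by
        simp [hz_def, PiLp.add_apply, PiLp.smul_apply, PiLp.sub_apply]
      have hz1' : (z t₀) 1 = x 1 + t₀ * (y 1 - x 1) := by
        simp [hz_def, PiLp.add_apply, PiLp.smul_apply, PiLp.sub_apply]
      rw [hz0] at ha
      rw [hz1'] at hb
      apply hyL
      show ⟪y - x, w⟫ = (0:ℝ)
      have hinner : ⟪y - x, w⟫ = (y 0 - x 0) * (-(P 1 - x 1)) + (y 1 - x 1) * (P 0 - x 0) := by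
        simp [hw_def, PiLp.inner_apply, Fin.sum_univ_two, RCLike.inner_apply, PiLp.sub_apply]
        ring
      rw [hinner]
      linear_combination (-(y 1 - x 1)) * ha + (y 0 - x 0) * hb
    · -- a point with sweepF θ₁ > 0 > sweepF θ₂ : contradicts pointwise monotonicity
      set t := (t₀ + t₁) / 2 with ht_def
      have ht1 : t₁ < t := by rw [ht_def]; linarith
      have ht0 : t < t₀ := by rw [ht_def]; linarith
      have htpos : 0 ≤ t := le_trans ht₁0 ht1.le
      have htlt : t ≤ 1 := le_trans ht0.le ht₀1.le
      have hs1 : 0 ≤ sweepF P θ₁ (z t) := by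
        rw [hz1]
        have := mul_lt_mul_of_pos_right ht0 hpq
        rw [ht₀e] at this
        linarith
      have hs2 : sweepF P θ₂ (z t) < 0 := by
        rw [hz2]
        have := mul_lt_mul_of_pos_right ht1 hrs
        rw [ht₁e] at this
        linarith
      exact absurd (hpt (z t) θ₁ θ₂ h1 h12.le h2 (hzβ t htpos htlt) hs1) (not_le.mpr hs2)
  -- Arithmetic of target values
  have hn0 : (n : ℝ≥0∞) ≠ 0 := Nat.cast_ne_zero.mpr (by omega)
  have hntop : (n : ℝ≥0∞) ≠ ⊤ := ENNReal.natCast_ne_top n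
  have hk1ne : ∀ k : Fin (n - 1), (((k : ℕ) : ℝ≥0∞) + 1) ≠ 0 := by
    intro k
    simp
  have hTpos : ∀ k : Fin (n - 1), 0 < (((k : ℕ) + 1 : ℝ≥0∞) / (n : ℝ≥0∞)) * volume C := by
    intro k
    exact ENNReal.mul_pos (ENNReal.div_pos (hk1ne k) hntop).ne' hCpos.ne'
  have hTltV : ∀ k : Fin (n - 1),
      (((k : ℕ) + 1 : ℝ≥0∞) / (n : ℝ≥0∞)) * volume C < volume C := by
    intro k
    have hdiv : (((k : ℕ) + 1 : ℝ≥0∞) / (n : ℝ≥0∞)) < 1 := by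
      rw [ENNReal.div_lt_iff (Or.inl hn0) (Or.inl hntop), one_mul]
      have : ((k : ℕ) + 1 : ℕ) < n := by
        have := k.isLt
        omega
      exact_mod_cast this
    calc (((k : ℕ) + 1 : ℝ≥0∞) / (n : ℝ≥0∞)) * volume C
        < 1 * volume C := ENNReal.mul_lt_mul_left hCpos.ne' hvolC hdiv
      _ = volume C := one_mul _
  have hTmono : ∀ k l : Fin (n - 1), k < l →
      (((k : ℕ) + 1 : ℝ≥0∞) / (n : ℝ≥0∞)) * volume C
        < (((l : ℕ) + 1 : ℝ≥0∞) / (n : ℝ≥0∞)) * volume C := by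
    intro k l hkl
    apply ENNReal.mul_lt_mul_left hCpos.ne' hvolC
    rw [div_eq_mul_inv, div_eq_mul_inv]
    apply ENNReal.mul_lt_mul_left (ENNReal.inv_ne_zero.mpr hntop) (ENNReal.inv_ne_top.mpr hn0)
    have : ((k : ℕ) + 1 : ℕ) < ((l : ℕ) + 1 : ℕ) := by
      have : (k : ℕ) < (l : ℕ) := hkl
      omega
    exact_mod_cast this
  -- existence of the angles
  have hex : ∀ k : Fin (n - 1), ∃ t, t ∈ Set.Ioo α β ∧
      A t = (((k : ℕ) + 1 : ℝ≥0∞) / (n : ℝ≥0∞)) * volume C := by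
    intro k
    have hmem : (((k : ℕ) + 1 : ℝ≥0∞) / (n : ℝ≥0∞)) * volume C ∈ Set.Ioo (A α) (A β) := by
      rw [hα, hβ]
      exact ⟨hTpos k, hTltV k⟩
    obtain ⟨t, ht, hAt⟩ := intermediate_value_Ioo hαβ.le hAcont.continuousOn hmem
    exact ⟨t, ht, hAt⟩
  set θf : Fin (n - 1) → ℝ := fun k => (hex k).choose with hθf_def
  have hspec : ∀ k, θf k ∈ Set.Ioo α β ∧
      A (θf k) = (((k : ℕ) + 1 : ℝ≥0∞) / (n : ℝ≥0∞)) * volume C := fun k => (hex k).choose_spec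
  refine ⟨θf, ⟨?_, fun k => (hspec k).1, fun k => (hspec k).2⟩, ?_⟩
  · intro k l hkl
    by_contra hle
    have h1 := hmono (θf l) (θf k) (hspec l).1.1.le (not_lt.mp hle) (hspec k).1.2.le
    rw [(hspec k).2, (hspec l).2] at h1
    exact absurd h1 (hTmono k l hkl).not_ge
  · rintro χ ⟨hχmono, hχmem, hχval⟩
    funext k
    have h1 : A (χ k) = A (θf k) := by rw [hχval k, (hspec k).2]
    by_contra hne
    rcases lt_or_gt_of_ne hne with h | h
    · have := hstrict (χ k) (θf k) (hχmem k).1.le h (hspec k).1.2.le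
        (by rw [hχval k]; exact hTpos k) (by rw [(hspec k).2]; exact hTltV k)
      exact absurd h1 this.ne
    · have := hstrict (θf k) (χ k) (hspec k).1.1.le h (hχmem k).2.le
        (by rw [(hspec k).2]; exact hTpos k) (by rw [hχval k]; exact hTltV k)
      exact absurd h1.symm this.ne
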